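/- Let X in ℚ[[t]] be the unique power series with zero constant term satisfying X = B·(1 + X + X^2), where B = t·T^2 and T = 1 + t·T^3 (T with constant term 1). Then T·(1 + X^2) = 1 + X + X^2 and (T - 1)·(1 + X^2) = X. -/

import Mathlib

/-- With `T = 1 + tT^3` (constant term 1), `B = tT^2`, and `X` the unique series with zero
constant term satisfying `X = B(1 + X + X^2)`, we have `T(1 + X^2) = 1 + X + X^2` and
`(T - 1)(1 + X^2) = X`. -/
theorem ternary_tree_X_relations (T B Xs : PowerSeries ℚ)
    (hT0 : PowerSeries.constantCoeff T = 1)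
    (hT : T = 1 + PowerSeries.X * T ^ 3)
    (hB : B = PowerSeries.X * T ^ 2)
    (hXs0 : PowerSeries.constantCoeff Xs = 0)
    (hXs : Xs = B * (1 + Xs + Xs ^ 2)) :
    T * (1 + Xs ^ 2) = 1 + Xs + Xs ^ 2 ∧ (T - 1) * (1 + Xs ^ 2) = Xs := by
  have key : T * (1 + Xs ^ 2) = 1 + Xs + Xs ^ 2 := by
    linear_combination (-T) * hXs + (-(T * (1 + Xs + Xs ^ 2))) * hB +
      (1 + Xs + Xs ^ 2) * hT
  exact ⟨key, by linear_combination key⟩
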